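/- Let S be a Schur module over F[G], let f : F → F be any function with f(0) = 0, and for α = Σ α_g g define f[α] = Σ f(α_g) g. Then f[α] ∈ S for every α ∈ S. -/

import Mathlib

/-- The Hadamard (coefficientwise) product on the group algebra. -/
noncomputable def hadamard {F G : Type*} [Semiring F]
    (α β : MonoidAlgebra F G) : MonoidAlgebra F G :=
  MonoidAlgebra.ofCoeff (Finsupp.zipWith (· * ·) (mul_zero 0) α.coeff β.coeff)

/-- The simple quantity `C̄ = ∑_{g ∈ C} g` of a finite subset of `G`. -/
noncomputable def simpleQuantity (F : Type*) {G : Type*} [Semiring F] (C : Finset G) :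
    MonoidAlgebra F G :=
  ∑ g ∈ C, MonoidAlgebra.ofCoeff (Finsupp.single g 1)

/-- A partition of `G` into finite (nonempty) classes, i.e. a partition of finite support. -/
structure FinPartition (G : Type*) where
  classes : Set (Finset G)
  nonempty : ∀ C ∈ classes, C.Nonempty
  existsUnique_mem : ∀ g : G, ∃! C, C ∈ classes ∧ g ∈ C

/-- The Schur module associated to a partition of finite support: the `F`-span of the
simple quantities of the classes. -/
noncomputable def schurModule (F : Type*) {G : Type*} [Field F] (P : FinPartition G) :
    Submodule F (MonoidAlgebra F G) :=
  Submodule.span F (simpleQuantity F '' P.classes)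

section Helpers
variable {F G : Type*} [Field F]

lemma ma_sub_apply (α β : MonoidAlgebra F G) (g : G) : (α - β).coeff g = α.coeff g - β.coeff g :=
  Finsupp.sub_apply _ _ _

lemma ma_add_apply (α β : MonoidAlgebra F G) (g : G) : (α + β).coeff g = α.coeff g + β.coeff g :=
  Finsupp.add_apply _ _ _

lemma ma_smul_apply (c : F) (α : MonoidAlgebra F G) (g : G) : (c • α).coeff g = c * α.coeff g :=
  (Finsupp.smul_apply _ _ _).trans (smul_eq_mul ..)

lemma ma_zero_apply (g : G) : (0 : MonoidAlgebra F G).coeff g = 0 := rfl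

open Classical in
lemma simpleQuantity_apply (C : Finset G) (g : G) :
    (simpleQuantity F C).coeff g = if g ∈ C then 1 else 0 := by
  classical
  rw [simpleQuantity, MonoidAlgebra.coeff_sum, Finsupp.finset_sum_apply]
  simp [Finsupp.single_apply]

/-- constant on classes -/
def ConstOn (P : FinPartition G) (α : MonoidAlgebra F G) : Prop :=
  ∀ C ∈ P.classes, ∀ g ∈ C, ∀ g' ∈ C, α.coeff g = α.coeff g'

lemma class_eq (P : FinPartition G) {C D : Finset G} {g : G} (hC : C ∈ P.classes)
    (hD : D ∈ P.classes) (hgC : g ∈ C) (hgD : g ∈ D) : C = D := by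
  obtain ⟨E, _, hE⟩ := P.existsUnique_mem g
  rw [hE C ⟨hC, hgC⟩, hE D ⟨hD, hgD⟩]

lemma constOn_of_mem (P : FinPartition G)
    (α : MonoidAlgebra F G) (hα : α ∈ schurModule F P) : ConstOn P α := by
  classical
  refine Submodule.span_induction ?_ ?_ ?_ ?_ hα
  · rintro x ⟨D, hD, rfl⟩ C hC g hg g' hg'
    rw [simpleQuantity_apply, simpleQuantity_apply]
    have h1 : g ∈ D ↔ C = D :=
      ⟨fun hgD => class_eq P hC hD hg hgD, fun h => h ▸ hg⟩
    have h2 : g' ∈ D ↔ C = D :=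
      ⟨fun hgD => class_eq P hC hD hg' hgD, fun h => h ▸ hg'⟩
    simp only [h1, h2]
  · intro C hC g hg g' hg'; rfl
  · intro x y _ _ hx hy C hC g hg g' hg'
    rw [ma_add_apply, ma_add_apply, hx C hC g hg g' hg', hy C hC g hg g' hg']
  · intro c x _ hx C hC g hg g' hg'
    rw [ma_smul_apply, ma_smul_apply, hx C hC g hg g' hg']

lemma mem_of_constOn (P : FinPartition G)
    (α : MonoidAlgebra F G) (hα : ConstOn P α) : α ∈ schurModule F P := by
  classical
  obtain ⟨n, hn⟩ : ∃ n, α.coeff.support.card ≤ n := ⟨_, le_refl _⟩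
  induction n generalizing α with
  | zero =>
    have : α = 0 := by
      rwa [Nat.le_zero, Finset.card_eq_zero, Finsupp.support_eq_empty, MonoidAlgebra.coeff_eq_zero] at hn
    simp [this]
  | succ n ih =>
    by_cases h0 : α = 0
    · simp [h0]
    obtain ⟨g, hg⟩ := Finsupp.support_nonempty_iff.mpr (show α.coeff ≠ 0 by simpa using h0)
    obtain ⟨C, ⟨hC, hgC⟩, hCuniq⟩ := P.existsUnique_mem g
    set β : MonoidAlgebra F G := α - α.coeff g • simpleQuantity F C with hβ
    have hmemC : ∀ h : G, h ∈ C → β.coeff h = 0 := by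
      intro h hh
      rw [hβ, ma_sub_apply, ma_smul_apply, simpleQuantity_apply, if_pos hh, mul_one,
        hα C hC g hgC h hh, sub_self]
    have hnotC : ∀ h : G, h ∉ C → β.coeff h = α.coeff h := by
      intro h hh
      rw [hβ, ma_sub_apply, ma_smul_apply, simpleQuantity_apply, if_neg hh, mul_zero, sub_zero]
    have hβconst : ConstOn P β := by
      intro D hD a ha a' ha'
      by_cases hDC : D = C
      · subst hDC; rw [hmemC a ha, hmemC a' ha']
      · have haC : a ∉ C := fun hac => hDC (class_eq P hD hC ha hac)
        have haC' : a' ∉ C := fun hac => hDC (class_eq P hD hC ha' hac)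
        rw [hnotC a haC, hnotC a' haC', hα D hD a ha a' ha']
    have hsupp : β.coeff.support ⊆ α.coeff.support.erase g := by
      intro h hh
      rw [Finsupp.mem_support_iff] at hh
      by_cases hhC : h ∈ C
      · exact absurd (hmemC h hhC) hh
      · rw [hnotC h hhC] at hh
        exact Finset.mem_erase.mpr ⟨fun he => hhC (he ▸ hgC), Finsupp.mem_support_iff.mpr hh⟩
    have hcard : β.coeff.support.card ≤ n := by
      have h1 : β.coeff.support.card ≤ (α.coeff.support.erase g).card := Finset.card_le_card hsupp
      have h2 : (α.coeff.support.erase g).card < α.coeff.support.card := Finset.card_erase_lt_of_mem hg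
      omega
    have hβmem : β ∈ schurModule F P := ih β hβconst hcard
    have hCmem : simpleQuantity F C ∈ schurModule F P :=
      Submodule.subset_span ⟨C, hC, rfl⟩
    have hdecomp : α = β + α.coeff g • simpleQuantity F C := by
      rw [hβ, sub_add_cancel]
    rw [hdecomp]
    exact Submodule.add_mem _ hβmem (Submodule.smul_mem _ _ hCmem)

end Helpers

theorem stmt4 {F G : Type*} [Field F] [CharZero F] [Group G]
    (P : FinPartition G) (f : F → F) (hf : f 0 = 0)
    (α : MonoidAlgebra F G) (hα : α ∈ schurModule F P) :
    MonoidAlgebra.ofCoeff (Finsupp.mapRange f hf α.coeff) ∈ schurModule F P := by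
  apply mem_of_constOn
  have h := constOn_of_mem P α hα
  intro C hC g hg g' hg'
  rw [MonoidAlgebra.coeff_ofCoeff, Finsupp.mapRange_apply, Finsupp.mapRange_apply, h C hC g hg g' hg']
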